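/- Let n ≥ r+1 and r ≥ g·d+2, and let the data x_1,…,x_n ∈ ℝ^d be in general position. Then there exists a constant c > 0 depending only on the data x_1,…,x_n (and on d, g, r) with the following property: for every family y_1,…,y_n ∈ ℝ^d in general position that differs from x_1,…,x_n in at most one index, there exists a configuration R* over an r-element subset of {1,…,n} (for the data y_1,…,y_n) which minimizes det W_R over all such configurations and whose cluster means satisfy ||m_{R*}(j)|| ≤ c for every nonempty cluster R*_j. -/

import Mathlib

open Matrix Finset Real

/-- The sample mean of the points `x i`, `i ∈ S`; a fixed a-priori vector `dflt` if `S = ∅`. -/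
noncomputable def clusterMean {n d : ℕ} (x : Fin n → Fin d → ℝ) (dflt : Fin d → ℝ)
    (S : Finset (Fin n)) : Fin d → ℝ :=
  if S.Nonempty then (S.card : ℝ)⁻¹ • ∑ i ∈ S, x i else dflt

/-- The pooled (within-groups) SSP matrix of the configuration `C` for the data `x`:
`W = Σ_j Σ_{i ∈ C j} (x i − m_j)(x i − m_j)ᵀ`, where `m_j` is the sample mean of cluster `j`. -/
noncomputable def pooledSSP {n d g : ℕ} (x : Fin n → Fin d → ℝ) (dflt : Fin g → Fin d → ℝ)
    (C : Fin g → Finset (Fin n)) : Matrix (Fin d) (Fin d) ℝ :=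
  ∑ j, ∑ i ∈ C j, Matrix.vecMulVec (x i - clusterMean x (dflt j) (C j))
    (x i - clusterMean x (dflt j) (C j))

/-- A configuration over an `r`-element subset of `{1,…,n}`: a family of `g` pairwise
disjoint (possibly empty) clusters whose union has exactly `r` elements. -/
def IsConfig {n g : ℕ} (r : ℕ) (C : Fin g → Finset (Fin n)) : Prop :=
  (∀ j k : Fin g, j ≠ k → Disjoint (C j) (C k)) ∧ (Finset.univ.biUnion C).card = r

/-- A family of points of `ℝ^d` is in general position if any `d+1` of them are affinely
independent. -/
def InGeneralPosition {n d : ℕ} (x : Fin n → Fin d → ℝ) : Prop :=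
  ∀ s : Finset (Fin n), s.card = d + 1 → AffineIndependent ℝ (fun i : s => x (i : Fin n))




noncomputable def eucNorm {d : ℕ} (v : Fin d → ℝ) : ℝ :=
  ‖(WithLp.linearEquiv 2 ℝ (Fin d → ℝ)).symm v‖

section N
variable {d : ℕ}
lemma eucNorm_eq_sqrt (v : Fin d → ℝ) : eucNorm v = Real.sqrt (v ⬝ᵥ v) := by
  rw [eucNorm, EuclideanSpace.norm_eq]
  congr 1
  simp [dotProduct, Real.norm_eq_abs, sq_abs, sq]

lemma eucNorm_nonneg (v : Fin d → ℝ) : 0 ≤ eucNorm v := norm_nonneg _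

lemma eucNorm_add_le (v w : Fin d → ℝ) : eucNorm (v + w) ≤ eucNorm v + eucNorm w := by
  rw [eucNorm, map_add]; exact norm_add_le _ _

lemma eucNorm_smul (c : ℝ) (v : Fin d → ℝ) : eucNorm (c • v) = |c| * eucNorm v := by
  rw [eucNorm, eucNorm, _root_.map_smul]; simpa using norm_smul c _

lemma eucNorm_sum_le {ι : Type*} (S : Finset ι) (f : ι → Fin d → ℝ) :
    eucNorm (∑ i ∈ S, f i) ≤ ∑ i ∈ S, eucNorm (f i) := by
  rw [eucNorm, map_sum]; exact norm_sum_le _ _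
end N

section CM
variable {n d : ℕ}

lemma clusterMean_congr {x y : Fin n → Fin d → ℝ} {dflt : Fin d → ℝ} {S : Finset (Fin n)}
    (h : ∀ i ∈ S, y i = x i) : clusterMean y dflt S = clusterMean x dflt S := by
  unfold clusterMean
  rw [Finset.sum_congr rfl h]

lemma eucNorm_clusterMean_le {x : Fin n → Fin d → ℝ} {dflt : Fin d → ℝ} {S : Finset (Fin n)}
    (hS : S.Nonempty) {B : ℝ} (h : ∀ i ∈ S, eucNorm (x i) ≤ B) :
    eucNorm (clusterMean x dflt S) ≤ B := by
  have hc : (0:ℝ) < S.card := by exact_mod_cast hS.card_pos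
  rw [clusterMean, if_pos hS, eucNorm_smul]
  calc |(S.card : ℝ)⁻¹| * eucNorm (∑ i ∈ S, x i)
      ≤ (S.card : ℝ)⁻¹ * ∑ i ∈ S, eucNorm (x i) := by
        rw [abs_of_nonneg (by positivity)]
        exact mul_le_mul_of_nonneg_left (eucNorm_sum_le _ _) (by positivity)
    _ ≤ (S.card : ℝ)⁻¹ * (S.card * B) := by
        refine mul_le_mul_of_nonneg_left ?_ (by positivity)
        calc ∑ i ∈ S, eucNorm (x i) ≤ ∑ i ∈ S, B := Finset.sum_le_sum h
          _ = S.card * B := by rw [Finset.sum_const, nsmul_eq_mul]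
    _ = B := by field_simp

lemma pooledSSP_congr {g : ℕ} {x y : Fin n → Fin d → ℝ} {dflt : Fin g → Fin d → ℝ}
    {C : Fin g → Finset (Fin n)} (h : ∀ j, ∀ i ∈ C j, y i = x i) :
    pooledSSP y dflt C = pooledSSP x dflt C := by
  unfold pooledSSP
  refine Finset.sum_congr rfl fun j _ => Finset.sum_congr rfl fun i hi => ?_
  rw [h j i hi, clusterMean_congr (h j)]
end CM


section VMV
variable {d : ℕ}

lemma quad_vecMulVec (a u : Fin d → ℝ) :
    u ⬝ᵥ (Matrix.vecMulVec a a *ᵥ u) = (a ⬝ᵥ u) * (a ⬝ᵥ u) := by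
  simp only [dotProduct, mulVec, Matrix.vecMulVec_apply, dotProduct]
  simp only [Finset.mul_sum, Finset.sum_mul]
  rw [Finset.sum_comm]
  congr 1; ext i; congr 1; ext j; ring

lemma psd_vecMulVec (a : Fin d → ℝ) : (Matrix.vecMulVec a a).PosSemidef := by
  refine Matrix.PosSemidef.of_dotProduct_mulVec_nonneg ?_ ?_
  · ext i j
    simp [Matrix.vecMulVec_apply, mul_comm]
  · intro u
    simp only [star_trivial]
    rw [quad_vecMulVec]
    exact mul_self_nonneg _

lemma psd_sum {ι : Type*} (S : Finset ι) (f : ι → Matrix (Fin d) (Fin d) ℝ)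
    (h : ∀ i ∈ S, (f i).PosSemidef) : (∑ i ∈ S, f i).PosSemidef := by
  classical
  induction S using Finset.induction_on with
  | empty => simpa using Matrix.PosSemidef.zero
  | insert _ _ hx ih =>
    rw [Finset.sum_insert hx]
    exact ((h _ (Finset.mem_insert_self _ _))).add (ih fun i hi => h i (Finset.mem_insert_of_mem hi))

lemma quad_sum {ι : Type*} (S : Finset ι) (f : ι → Matrix (Fin d) (Fin d) ℝ) (u : Fin d → ℝ) :
    u ⬝ᵥ ((∑ i ∈ S, f i) *ᵥ u) = ∑ i ∈ S, u ⬝ᵥ (f i *ᵥ u) := by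
  have h1 : (∑ i ∈ S, f i) *ᵥ u = ∑ i ∈ S, f i *ᵥ u := by
    ext k
    simp only [mulVec, dotProduct, Matrix.sum_apply, Finset.sum_apply, Finset.sum_mul]
    rw [Finset.sum_comm]
  rw [h1]
  simp only [dotProduct, Finset.sum_apply, Finset.mul_sum]
  rw [Finset.sum_comm]

end VMV
lemma posSemidef_pooledSSP {n d g : ℕ} (x : Fin n → Fin d → ℝ) (dflt : Fin g → Fin d → ℝ)
    (C : Fin g → Finset (Fin n)) : (pooledSSP x dflt C).PosSemidef := by
  refine psd_sum _ _ fun j _ => psd_sum _ _ fun i _ => psd_vecMulVec _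

section Recenter
variable {n d : ℕ}

lemma scalar_recenter {ι : Type*} (T : Finset ι) (hT : T.Nonempty) (a b : ι → ℝ) (ck cl : ℝ) :
    ∑ i ∈ T, (a i - ck) * (b i - cl) =
      ∑ i ∈ T, (a i - (T.card : ℝ)⁻¹ * ∑ j ∈ T, a j) * (b i - (T.card : ℝ)⁻¹ * ∑ j ∈ T, b j)
      + (T.card : ℝ) * (((T.card : ℝ)⁻¹ * ∑ j ∈ T, a j - ck) * ((T.card : ℝ)⁻¹ * ∑ j ∈ T, b j - cl)) := by
  have hc : (0:ℝ) < T.card := by exact_mod_cast hT.card_pos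
  have key : ∀ u v : ℝ, ∑ i ∈ T, (a i - u) * (b i - v)
      = ∑ i ∈ T, a i * b i - u * (∑ i ∈ T, b i) - v * (∑ i ∈ T, a i) + T.card * (u * v) := by
    intro u v
    rw [Finset.sum_congr rfl (fun i _ => by ring :
      ∀ i ∈ T, (a i - u) * (b i - v) = a i * b i - u * b i - v * a i + u * v)]
    simp [Finset.sum_add_distrib, Finset.sum_sub_distrib, Finset.mul_sum]
  rw [key, key]
  field_simp
  ring

lemma recenter_sum (T : Finset (Fin n)) (hT : T.Nonempty) (p : Fin n → Fin d → ℝ)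
    (c dflt : Fin d → ℝ) :
    ∑ i ∈ T, Matrix.vecMulVec (p i - c) (p i - c)
      = ∑ i ∈ T, Matrix.vecMulVec (p i - clusterMean p dflt T) (p i - clusterMean p dflt T)
        + (T.card : ℝ) • Matrix.vecMulVec (clusterMean p dflt T - c) (clusterMean p dflt T - c) := by
  have hm : ∀ k, clusterMean p dflt T k = (T.card : ℝ)⁻¹ * ∑ j ∈ T, p j k := by
    intro k
    simp [clusterMean, if_pos hT, Finset.sum_apply]
  ext k l
  simp only [Matrix.add_apply, Matrix.smul_apply, Matrix.sum_apply, Matrix.vecMulVec_apply,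
    Pi.sub_apply, smul_eq_mul, hm]
  exact scalar_recenter T hT (fun i => p i k) (fun i => p i l) (c k) (c l)

end Recenter

lemma psd_smul {d : ℕ} {M : Matrix (Fin d) (Fin d) ℝ} (hM : M.PosSemidef) {c : ℝ} (hc : 0 ≤ c) :
    (c • M).PosSemidef := by
  refine Matrix.PosSemidef.of_dotProduct_mulVec_nonneg ?_ ?_
  · unfold Matrix.IsHermitian
    rw [Matrix.conjTranspose_smul, hM.isHermitian]
    simp
  · intro u
    have := hM.dotProduct_mulVec_nonneg u
    simp only [star_trivial] at this ⊢
    rw [Matrix.smul_mulVec, dotProduct_smul, smul_eq_mul]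
    positivity

lemma pooled_decomp {n d g : ℕ} (x y : Fin n → Fin d → ℝ) (dflt : Fin g → Fin d → ℝ)
    (C : Fin g → Finset (Fin n)) (i₀ : Fin n) (js : Fin g)
    (hdis : ∀ j k : Fin g, j ≠ k → Disjoint (C j) (C k))
    (hi₀ : i₀ ∈ C js)
    (hy : ∀ i, i ≠ i₀ → y i = x i) :
    ∃ P : Matrix (Fin d) (Fin d) ℝ, P.PosSemidef ∧
      pooledSSP y dflt C = pooledSSP x dflt (fun j => (C j).erase i₀)
        + Matrix.vecMulVec (y i₀ - clusterMean y (dflt js) (C js))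
            (y i₀ - clusterMean y (dflt js) (C js)) + P := by
  classical
  set c : Fin d → ℝ := clusterMean y (dflt js) (C js) with hc
  set T : Finset (Fin n) := (C js).erase i₀ with hT
  set v : Fin d → ℝ := y i₀ - c with hv
  set m' : Fin d → ℝ := clusterMean x (dflt js) T with hm'
  refine ⟨if T.Nonempty then (T.card : ℝ) • Matrix.vecMulVec (m' - c) (m' - c) else 0, ?_, ?_⟩
  · split
    · exact psd_smul (psd_vecMulVec _) (by positivity)
    · exact Matrix.PosSemidef.zero
  · have hxy : ∀ i ∈ T, y i = x i := fun i hi => hy i (Finset.ne_of_mem_erase hi)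
    have hjne : ∀ j, j ≠ js → (C j).erase i₀ = C j := by
      intro j hj
      apply Finset.erase_eq_of_notMem
      intro hmem
      exact (Finset.disjoint_left.1 (hdis j js hj) hmem) hi₀
    have hstep : ∀ j : Fin g,
        (∑ i ∈ C j, Matrix.vecMulVec (y i - clusterMean y (dflt j) (C j))
          (y i - clusterMean y (dflt j) (C j)))
        = (∑ i ∈ (C j).erase i₀, Matrix.vecMulVec
            (x i - clusterMean x (dflt j) ((C j).erase i₀))
            (x i - clusterMean x (dflt j) ((C j).erase i₀)))
          + (if j = js then Matrix.vecMulVec v v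
              + (if T.Nonempty then (T.card : ℝ) • Matrix.vecMulVec (m' - c) (m' - c) else 0)
             else 0) := by
      intro j
      by_cases hj : j = js
      · subst hj
        rw [if_pos rfl]
        rw [← Finset.add_sum_erase _ _ hi₀]
        have hcm : clusterMean y (dflt j) (C j) = c := rfl
        have hterm : ∀ i ∈ (C j).erase i₀,
            Matrix.vecMulVec (y i - clusterMean y (dflt j) (C j)) (y i - clusterMean y (dflt j) (C j))
            = Matrix.vecMulVec (x i - c) (x i - c) := by
          intro i hi
          rw [hcm, hy i (Finset.ne_of_mem_erase hi)]
        rw [Finset.sum_congr rfl hterm, hcm]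
        by_cases hne : T.Nonempty
        · rw [if_pos hne]
          have := recenter_sum T hne x c (dflt j)
          rw [show (C j).erase i₀ = T from rfl] at *
          rw [this]
          abel
        · rw [if_neg hne]
          rw [Finset.not_nonempty_iff_eq_empty] at hne
          rw [show (C j).erase i₀ = T from rfl, hne]
          simp [hv]
      · rw [if_neg hj, hjne j hj, add_zero]
        refine Finset.sum_congr rfl fun i hi => ?_
        rw [hy i ?hne, clusterMean_congr fun i' hi' => hy i' ?_]
        case hne =>
          intro h; subst h
          exact (Finset.disjoint_left.1 (hdis j js hj) hi) hi₀
        · intro h; subst h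
          exact (Finset.disjoint_left.1 (hdis j js hj) hi') hi₀
    unfold pooledSSP
    rw [Finset.sum_congr rfl (fun j _ => hstep j)]
    rw [Finset.sum_add_distrib]
    rw [Finset.sum_ite_eq' Finset.univ js]
    rw [if_pos (Finset.mem_univ js)]
    abel


lemma eq_zero_of_dot_const {n d : ℕ} (x : Fin n → Fin d → ℝ) (s : Finset (Fin n))
    (hcard : s.card = d + 1)
    (haff : AffineIndependent ℝ (fun i : s => x (i : Fin n))) (u : Fin d → ℝ) (t : ℝ)
    (h : ∀ i ∈ s, x i ⬝ᵥ u = t) : u = 0 := by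
  classical
  have hne : s.Nonempty := Finset.card_pos.1 (by omega)
  obtain ⟨i0, hi0⟩ := hne
  set i0' : s := ⟨i0, hi0⟩
  rw [affineIndependent_iff_linearIndependent_vsub ℝ _ i0'] at haff
  have hcards : Fintype.card {j : s // j ≠ i0'} = d := by
    rw [Fintype.card_subtype_compl]
    simp [Fintype.card_coe, hcard]
  rcases Nat.eq_zero_or_pos d with hd | hd
  · subst hd
    exact Subsingleton.elim u 0
  have : Nonempty {j : s // j ≠ i0'} := by
    rw [← Fintype.card_pos_iff, hcards]; exact hd
  have hspan := haff.span_eq_top_of_card_eq_finrank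
    (by rw [hcards, Module.finrank_fin_fun])
  set f : (Fin d → ℝ) →ₗ[ℝ] ℝ :=
    { toFun := fun w => w ⬝ᵥ u
      map_add' := fun a b => add_dotProduct a b u
      map_smul' := fun c a => smul_dotProduct c a u }
  have hker : Submodule.span ℝ (Set.range fun j : {j : s // j ≠ i0'} =>
      (fun i : s => x (i : Fin n)) (j : s) -ᵥ (fun i : s => x (i : Fin n)) i0') ≤
      LinearMap.ker f := by
    rw [Submodule.span_le]
    rintro w ⟨j, rfl⟩
    simp only [SetLike.mem_coe, LinearMap.mem_ker]
    show ((x ((j : s) : Fin n)) - x i0) ⬝ᵥ u = 0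
    rw [sub_dotProduct, h _ (j : s).2, h _ hi0, sub_self]
  have hu : f u = 0 := by
    have : u ∈ LinearMap.ker f := hker (hspan ▸ Submodule.mem_top)
    exact this
  have : u ⬝ᵥ u = 0 := hu
  exact dotProduct_self_eq_zero.1 this

lemma posDef_pooledSSP {n d g : ℕ} (x : Fin n → Fin d → ℝ) (dflt : Fin g → Fin d → ℝ)
    (hx : InGeneralPosition x) (C : Fin g → Finset (Fin n)) (j0 : Fin g)
    (hbig : d + 1 ≤ (C j0).card) : (pooledSSP x dflt C).PosDef := by
  classical
  refine Matrix.PosDef.of_dotProduct_mulVec_pos (posSemidef_pooledSSP x dflt C).isHermitian ?_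
  intro u hu
  simp only [star_trivial]
  have hquad : u ⬝ᵥ (pooledSSP x dflt C *ᵥ u)
      = ∑ j, ∑ i ∈ C j, ((x i - clusterMean x (dflt j) (C j)) ⬝ᵥ u)
          * ((x i - clusterMean x (dflt j) (C j)) ⬝ᵥ u) := by
    unfold pooledSSP
    rw [quad_sum]
    refine Finset.sum_congr rfl fun j _ => ?_
    rw [quad_sum]
    exact Finset.sum_congr rfl fun i _ => quad_vecMulVec _ _
  rw [hquad]
  have hnonneg : ∀ j ∈ (Finset.univ : Finset (Fin g)),
      0 ≤ ∑ i ∈ C j, ((x i - clusterMean x (dflt j) (C j)) ⬝ᵥ u)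
          * ((x i - clusterMean x (dflt j) (C j)) ⬝ᵥ u) :=
    fun j _ => Finset.sum_nonneg fun i _ => mul_self_nonneg _
  rcases lt_or_eq_of_le (Finset.sum_nonneg hnonneg) with hpos | hzero
  · exact hpos
  exfalso
  have hall : ∀ j, ∀ i ∈ C j, (x i - clusterMean x (dflt j) (C j)) ⬝ᵥ u = 0 := by
    intro j i hi
    have hj := (Finset.sum_eq_zero_iff_of_nonneg hnonneg).1 hzero.symm j (Finset.mem_univ j)
    have := (Finset.sum_eq_zero_iff_of_nonneg
      (fun i _ => mul_self_nonneg _)).1 hj i hi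
    exact mul_self_eq_zero.1 this
  obtain ⟨s, hs_sub, hs_card⟩ := Finset.exists_subset_card_eq hbig
  have hu0 : u = 0 := by
    refine eq_zero_of_dot_const x s hs_card (hx s hs_card) u
      (clusterMean x (dflt j0) (C j0) ⬝ᵥ u) fun i hi => ?_
    have := hall j0 i (hs_sub hi)
    rw [sub_dotProduct, sub_eq_zero] at this
    exact this
  exact hu hu0

lemma det_one_add_psd {d : ℕ} {Q : Matrix (Fin d) (Fin d) ℝ} (hQ : Q.PosSemidef) :
    1 ≤ (1 + Q).det := by
  classical
  have hH : (1 + Q).IsHermitian := by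
    unfold Matrix.IsHermitian
    rw [Matrix.conjTranspose_add, hQ.isHermitian]
    simp
  rw [hH.det_eq_prod_eigenvalues]
  have h1 : ∀ i, 1 ≤ hH.eigenvalues i := by
    intro i
    have hmv := hH.mulVec_eigenvectorBasis i
    set w : Fin d → ℝ := ⇑(hH.eigenvectorBasis i) with hw
    have hwne : w ≠ 0 := by
      intro h0
      have := hH.eigenvectorBasis.orthonormal.1 i
      rw [show (hH.eigenvectorBasis i) = 0 from by ext k; exact congrFun h0 k] at this
      simp at this
    have hww : 0 < w ⬝ᵥ w := by
      rcases lt_or_eq_of_le (Finset.sum_nonneg fun k _ => mul_self_nonneg (w k)) with h | h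
      · exact h
      · exact absurd (dotProduct_self_eq_zero.1 h.symm) hwne
    have hdot : w ⬝ᵥ ((1 + Q) *ᵥ w) = hH.eigenvalues i * (w ⬝ᵥ w) := by
      rw [hmv]
      simp [dotProduct_smul, smul_eq_mul]
    have hexp : w ⬝ᵥ ((1 + Q) *ᵥ w) = w ⬝ᵥ w + w ⬝ᵥ (Q *ᵥ w) := by
      rw [Matrix.add_mulVec, dotProduct_add, Matrix.one_mulVec]
    have hqw : 0 ≤ w ⬝ᵥ (Q *ᵥ w) := by simpa using hQ.dotProduct_mulVec_nonneg w
    nlinarith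
  calc (1:ℝ) = ∏ _i : Fin d, 1 := by simp
    _ ≤ ∏ i, hH.eigenvalues i := Finset.prod_le_prod (by simp) (fun i _ => h1 i)

open scoped MatrixOrder in
lemma det_mono_psd {d : ℕ} {A P : Matrix (Fin d) (Fin d) ℝ} (hA : A.PosDef)
    (hP : P.PosSemidef) : A.det ≤ (A + P).det := by
  classical
  set S : Matrix (Fin d) (Fin d) ℝ := CFC.sqrt A with hSdef
  have hS2 : S * S = A := CFC.sqrt_mul_sqrt_self A hA.posSemidef.nonneg
  have hSpsd : S.PosSemidef := (CFC.sqrt_nonneg A).posSemidef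
  have hdetA : 0 < A.det := hA.det_pos
  have hdetS : S.det ≠ 0 := by
    intro h
    rw [← hS2, Matrix.det_mul, h, mul_zero] at hdetA
    exact lt_irrefl _ hdetA
  have hSunit : IsUnit S.det := isUnit_iff_ne_zero.2 hdetS
  have hSinv : S * S⁻¹ = 1 := Matrix.mul_nonsing_inv S hSunit
  have hSinv' : S⁻¹ * S = 1 := Matrix.nonsing_inv_mul S hSunit
  have hSH : S⁻¹.conjTranspose = S⁻¹ := by
    rw [Matrix.conjTranspose_nonsing_inv, hSpsd.isHermitian]
  have hQpsd : (S⁻¹ * P * S⁻¹).PosSemidef := by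
    have := hP.conjTranspose_mul_mul_same S⁻¹
    rwa [hSH] at this
  have hfact : A + P = S * (1 + S⁻¹ * P * S⁻¹) * S := by
    rw [Matrix.mul_add, Matrix.add_mul, Matrix.mul_one, hS2]
    congr 1
    symm
    calc S * (S⁻¹ * P * S⁻¹) * S = (S * S⁻¹) * P * (S⁻¹ * S) := by
          simp only [Matrix.mul_assoc]
      _ = P := by rw [hSinv, hSinv', Matrix.one_mul, Matrix.mul_one]
  calc A.det = A.det * 1 := (mul_one _).symm
    _ ≤ A.det * (1 + S⁻¹ * P * S⁻¹).det :=
        mul_le_mul_of_nonneg_left (det_one_add_psd hQpsd) hdetA.le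
    _ = (A + P).det := by
        rw [hfact, Matrix.det_mul, Matrix.det_mul, ← hS2, Matrix.det_mul]
        ring

lemma det_add_vmv {d : ℕ} {A : Matrix (Fin d) (Fin d) ℝ} (hA : A.PosDef) (v : Fin d → ℝ) :
    (A + Matrix.vecMulVec v v).det = A.det * (1 + v ⬝ᵥ (A⁻¹ *ᵥ v)) := by
  classical
  have hAu : IsUnit A.det := isUnit_iff_ne_zero.2 hA.det_pos.ne'
  rw [Matrix.vecMulVec_eq Unit v v, Matrix.det_add_replicateCol_mul_replicateRow hAu]
  congr 1
  rw [Matrix.det_unique]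
  simp only [Matrix.add_apply, Matrix.one_apply_eq, Matrix.mul_apply, Matrix.replicateRow_apply,
    Matrix.replicateCol_apply, dotProduct, mulVec, dotProduct, Finset.sum_mul, Finset.mul_sum]
  congr 1
  rw [Finset.sum_comm]
  exact Finset.sum_congr rfl fun k _ => Finset.sum_congr rfl fun l _ => by ring
lemma dot_symm {d : ℕ} {M : Matrix (Fin d) (Fin d) ℝ} (hM : Mᵀ = M) (a b : Fin d → ℝ) :
    a ⬝ᵥ (M *ᵥ b) = b ⬝ᵥ (M *ᵥ a) := by
  have hsymm : ∀ k l, M k l = M l k := by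
    intro k l; conv_lhs => rw [← hM]
    rfl
  simp only [dotProduct, mulVec, dotProduct, Finset.mul_sum]
  rw [Finset.sum_comm]
  exact Finset.sum_congr rfl fun l _ => Finset.sum_congr rfl fun k _ => by rw [hsymm k l]; ring

lemma cauchy_pd {d : ℕ} {A : Matrix (Fin d) (Fin d) ℝ} (hA : A.PosDef) (v : Fin d → ℝ) :
    (v ⬝ᵥ v) * (v ⬝ᵥ v) ≤ (v ⬝ᵥ (A *ᵥ v)) * (v ⬝ᵥ (A⁻¹ *ᵥ v)) := by
  classical
  by_cases hv : v = 0
  · subst hv; simp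
  have hAu : IsUnit A.det := isUnit_iff_ne_zero.2 hA.det_pos.ne'
  have hAA : A * A⁻¹ = 1 := Matrix.mul_nonsing_inv A hAu
  have hAA' : A⁻¹ * A = 1 := Matrix.nonsing_inv_mul A hAu
  have hAt : Aᵀ = A := hA.isHermitian
  have hAit : (A⁻¹)ᵀ = A⁻¹ := by
    rw [Matrix.transpose_nonsing_inv, hAt]
  have ha : 0 < v ⬝ᵥ (A *ᵥ v) := by simpa using hA.dotProduct_mulVec_pos hv
  set a : ℝ := v ⬝ᵥ (A *ᵥ v)
  set q : ℝ := v ⬝ᵥ (A⁻¹ *ᵥ v)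
  have key : ∀ t : ℝ, 0 ≤ a * (t * t) + (2 * (v ⬝ᵥ v)) * t + q := by
    intro t
    have hpsd := hA.posSemidef.dotProduct_mulVec_nonneg (t • v + A⁻¹ *ᵥ v)
    simp only [star_trivial] at hpsd
    have h1 : A *ᵥ (A⁻¹ *ᵥ v) = v := by
      rw [Matrix.mulVec_mulVec, hAA, Matrix.one_mulVec]
    have h2 : (A⁻¹ *ᵥ v) ⬝ᵥ (A *ᵥ v) = v ⬝ᵥ v := by
      rw [dot_symm hAt, h1]
    have h3 : (A⁻¹ *ᵥ v) ⬝ᵥ v = q := by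
      rw [dotProduct_comm, ← dot_symm hAit]
    have hexp : (t • v + A⁻¹ *ᵥ v) ⬝ᵥ (A *ᵥ (t • v + A⁻¹ *ᵥ v))
        = a * (t * t) + (2 * (v ⬝ᵥ v)) * t + q := by
      simp only [Matrix.mulVec_add, Matrix.mulVec_smul, dotProduct_add, add_dotProduct,
        dotProduct_smul, smul_dotProduct, h1, h2, h3, smul_eq_mul]
      ring
    rw [hexp] at hpsd
    exact hpsd
  have hdisc := discrim_le_zero key
  rw [discrim] at hdisc
  nlinarith

lemma quad_upper {d : ℕ} (A : Matrix (Fin d) (Fin d) ℝ) (v : Fin d → ℝ) :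
    v ⬝ᵥ (A *ᵥ v) ≤ (∑ k, ∑ l, |A k l|) * (v ⬝ᵥ v) := by
  have hsq : ∀ k, v k * v k ≤ v ⬝ᵥ v := by
    intro k
    exact Finset.single_le_sum (f := fun i => v i * v i)
      (fun i _ => mul_self_nonneg _) (Finset.mem_univ k)
  have hterm : ∀ k l, v k * (A k l * v l) ≤ |A k l| * (v ⬝ᵥ v) := by
    intro k l
    have h1 : v k * (A k l * v l) ≤ |v k * (A k l * v l)| := le_abs_self _
    have h2 : |v k * (A k l * v l)| = |A k l| * |v k * v l| := by
      rw [abs_mul, abs_mul, abs_mul]; ring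
    have h3 : |v k * v l| ≤ v ⬝ᵥ v := by
      have := hsq k; have := hsq l
      have habs : |v k * v l| * |v k * v l| ≤ (v ⬝ᵥ v) * (v ⬝ᵥ v) := by
        rw [abs_mul_abs_self]
        nlinarith [mul_self_nonneg (v k * v l - v ⬝ᵥ v), mul_self_nonneg (v k), mul_self_nonneg (v l)]
      nlinarith [abs_nonneg (v k * v l), Finset.sum_nonneg (fun i (_ : i ∈ Finset.univ) => mul_self_nonneg (v i))]
    calc v k * (A k l * v l) ≤ |A k l| * |v k * v l| := h1.trans h2.le
      _ ≤ |A k l| * (v ⬝ᵥ v) := mul_le_mul_of_nonneg_left h3 (abs_nonneg _)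
  calc v ⬝ᵥ (A *ᵥ v) = ∑ k, ∑ l, v k * (A k l * v l) := by
        simp [dotProduct, mulVec, Finset.mul_sum]
    _ ≤ ∑ k, ∑ l, |A k l| * (v ⬝ᵥ v) :=
        Finset.sum_le_sum fun k _ => Finset.sum_le_sum fun l _ => hterm k l
    _ = (∑ k, ∑ l, |A k l|) * (v ⬝ᵥ v) := by rw [Finset.sum_mul]; congr 1; ext k; rw [Finset.sum_mul]


lemma psd_det_nonneg {d : ℕ} {M : Matrix (Fin d) (Fin d) ℝ} (hM : M.PosSemidef) :
    0 ≤ M.det := by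
  rw [hM.isHermitian.det_eq_prod_eigenvalues]
  exact Finset.prod_nonneg fun i _ => by exact_mod_cast hM.eigenvalues_nonneg i

lemma exists_big_cluster {n g d : ℕ} (C : Fin g → Finset (Fin n)) {m : ℕ}
    (hcard : (Finset.univ.biUnion C).card = m) (h : g * d < m) :
    ∃ j, d + 1 ≤ (C j).card := by
  by_contra hcon
  push_neg at hcon
  have h1 : (Finset.univ.biUnion C).card ≤ ∑ j, (C j).card := Finset.card_biUnion_le
  have h2 : ∑ j, (C j).card ≤ ∑ _j : Fin g, d :=
    Finset.sum_le_sum fun j _ => Nat.lt_add_one_iff.1 (hcon j)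
  simp only [Finset.sum_const, Finset.card_univ, Fintype.card_fin, smul_eq_mul] at h2
  omega

lemma isConfig_single {n g r : ℕ} (hg : 0 < g) (S : Finset (Fin n)) (hS : S.card = r) :
    IsConfig r (fun j : Fin g => if j = ⟨0, hg⟩ then S else ∅) := by
  classical
  constructor
  · intro j k hjk
    simp only
    by_cases hj : j = ⟨0, hg⟩
    · subst hj
      rw [if_pos rfl, if_neg (fun h => hjk (h.symm))]
      exact Finset.disjoint_empty_right _
    · rw [if_neg hj]
      exact Finset.disjoint_empty_left _
  · have : (Finset.univ.biUnion fun j : Fin g => if j = ⟨0, hg⟩ then S else ∅) = S := by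
      ext i
      simp only [Finset.mem_biUnion, Finset.mem_univ, true_and]
      constructor
      · rintro ⟨j, hj⟩
        by_cases h : j = ⟨0, hg⟩
        · rwa [if_pos h] at hj
        · rw [if_neg h] at hj; exact absurd hj (Finset.notMem_empty i)
      · intro hi; exact ⟨⟨0, hg⟩, by rwa [if_pos rfl]⟩
    rw [this, hS]

lemma biUnion_erase {n g : ℕ} (C : Fin g → Finset (Fin n)) (i₀ : Fin n) :
    (Finset.univ.biUnion fun j => (C j).erase i₀) = (Finset.univ.biUnion C).erase i₀ := by
  classical
  ext a
  simp only [Finset.mem_biUnion, Finset.mem_erase, Finset.mem_univ, true_and]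
  tauto

lemma ssp_singleton {n d : ℕ} (y : Fin n → Fin d → ℝ) (dflt : Fin d → ℝ) (a : Fin n) :
    ∑ i ∈ ({a} : Finset (Fin n)), Matrix.vecMulVec (y i - clusterMean y dflt {a})
      (y i - clusterMean y dflt {a}) = 0 := by
  have hm : clusterMean y dflt {a} = y a := by
    rw [clusterMean, if_pos (Finset.singleton_nonempty a)]
    simp
  rw [Finset.sum_singleton, hm, sub_self]
  ext k l
  simp [Matrix.vecMulVec_apply]


/-- Theorem 4.1(a) of the paper.  If `n ≥ r + 1` and `r ≥ g·d + 2` and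
the data are in general position, then there is a constant `c > 0`, depending only on the
data, bounding (in Euclidean norm) the cluster means of some TDC-optimal configuration of
any admissible modification of the data in at most one index. -/
theorem tdc_means_withstand_one_replacement {n d g r : ℕ} (hg : 0 < g)
    (hn : r + 1 ≤ n) (hr : g * d + 2 ≤ r)
    (x : Fin n → Fin d → ℝ) (hx : InGeneralPosition x) (dflt : Fin g → Fin d → ℝ) :
    ∃ c : ℝ, 0 < c ∧
      ∀ y : Fin n → Fin d → ℝ, InGeneralPosition y →
        (Finset.univ.filter (fun i => y i ≠ x i)).card ≤ 1 →
        ∃ C : Fin g → Finset (Fin n), IsConfig r C ∧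
          (∀ P : Fin g → Finset (Fin n), IsConfig r P →
            (pooledSSP y dflt C).det ≤ (pooledSSP y dflt P).det) ∧
          ∀ j : Fin g, (C j).Nonempty →
            Real.sqrt (clusterMean y (dflt j) (C j) ⬝ᵥ clusterMean y (dflt j) (C j)) ≤ c := by
  classical
  have hn0 : 0 < n := by omega
  have huniv : (Finset.univ : Finset (Fin n)).card = n := by
    rw [Finset.card_univ, Fintype.card_fin]
  -- bound on the data
  obtain ⟨B, hB⟩ : ∃ B : ℝ, ∀ i, eucNorm (x i) ≤ B :=
    ⟨((Finset.univ : Finset (Fin n)).image fun i => eucNorm (x i)).max'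
      (Finset.Nonempty.image ⟨⟨0, hn0⟩, Finset.mem_univ _⟩ _), fun i =>
      Finset.le_max' _ _ (Finset.mem_image_of_mem (fun i => eucNorm (x i)) (Finset.mem_univ i))⟩
  have hB0 : 0 ≤ B := (eucNorm_nonneg _).trans (hB ⟨0, hn0⟩)
  -- configurations
  set Cfgs : Finset (Fin g → Finset (Fin n)) :=
    Finset.univ.filter (fun C => IsConfig r C) with hCfgsdef
  have hCfgs_mem : ∀ C, C ∈ Cfgs ↔ IsConfig r C := fun C =>
    ⟨fun h => (Finset.mem_filter.1 h).2, fun h => Finset.mem_filter.2 ⟨Finset.mem_univ _, h⟩⟩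
  have hCfgs_ne : Cfgs.Nonempty := by
    obtain ⟨S, -, hS⟩ := Finset.exists_subset_card_eq
      (show r ≤ (Finset.univ : Finset (Fin n)).card by omega)
    exact ⟨_, (hCfgs_mem _).2 (isConfig_single hg S hS)⟩
  set D0 : ℝ := (Cfgs.image fun C => (pooledSSP x dflt C).det).max' (hCfgs_ne.image _)
    with hD0def
  have hD0 : ∀ C, IsConfig r C → (pooledSSP x dflt C).det ≤ D0 := fun C hC =>
    Finset.le_max' _ _ (Finset.mem_image_of_mem (fun C => (pooledSSP x dflt C).det)
      ((hCfgs_mem _).2 hC))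
  have hD0nn : 0 ≤ D0 := by
    obtain ⟨C0, hC0⟩ := hCfgs_ne
    exact (psd_det_nonneg (posSemidef_pooledSSP x dflt C0)).trans
      (hD0 C0 ((hCfgs_mem _).1 hC0))
  -- sub-configurations (r - 1 points)
  set Sub : Finset (Fin g → Finset (Fin n)) :=
    Finset.univ.filter (fun C : Fin g → Finset (Fin n) =>
      (Finset.univ.biUnion C).card = r - 1) with hSubdef
  have hSub_mem : ∀ C : Fin g → Finset (Fin n),
      C ∈ Sub ↔ (Finset.univ.biUnion C).card = r - 1 := fun C =>
    ⟨fun h => (Finset.mem_filter.1 h).2, fun h => Finset.mem_filter.2 ⟨Finset.mem_univ _, h⟩⟩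
  have hSubPD : ∀ C ∈ Sub, (pooledSSP x dflt C).PosDef := by
    intro C hC
    have hcard := (hSub_mem _).1 hC
    obtain ⟨j0, hj0⟩ := exists_big_cluster (d := d) C hcard (by omega)
    exact posDef_pooledSSP x dflt hx C j0 hj0
  have hSub_ne : Sub.Nonempty := by
    obtain ⟨S, -, hS⟩ := Finset.exists_subset_card_eq
      (show r - 1 ≤ (Finset.univ : Finset (Fin n)).card by omega)
    exact ⟨_, (hSub_mem _).2 (isConfig_single hg S hS).2⟩
  set δ : ℝ := (Sub.image fun C => (pooledSSP x dflt C).det).min' (hSub_ne.image _) with hδdef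
  have hδpos : 0 < δ := by
    obtain ⟨C0, hC0, hEq⟩ := Finset.mem_image.1
      (Finset.min'_mem (Sub.image fun C => (pooledSSP x dflt C).det) (hSub_ne.image _))
    rw [hδdef, ← hEq]
    exact (hSubPD C0 hC0).det_pos
  have hδle : ∀ C ∈ Sub, δ ≤ (pooledSSP x dflt C).det := fun C hC =>
    Finset.min'_le _ _ (Finset.mem_image_of_mem (fun C => (pooledSSP x dflt C).det) hC)
  set Λ : ℝ := (Sub.image fun C => ∑ k, ∑ l, |(pooledSSP x dflt C) k l|).max'
    (hSub_ne.image _) + 1 with hΛdef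
  have hΛ : ∀ C ∈ Sub, (∑ k, ∑ l, |(pooledSSP x dflt C) k l|) ≤ Λ := fun C hC => by
    have := Finset.le_max' _ _ (Finset.mem_image_of_mem
      (fun C => ∑ k, ∑ l, |(pooledSSP x dflt C) k l|) hC)
    rw [hΛdef]; linarith
  have hΛpos : 0 < Λ := by
    obtain ⟨C0, hC0⟩ := hSub_ne
    have h0 : (0:ℝ) ≤ ∑ k, ∑ l, |(pooledSSP x dflt C0) k l| := by positivity
    have := Finset.le_max' (Sub.image fun C => ∑ k, ∑ l, |(pooledSSP x dflt C) k l|) _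
      (Finset.mem_image_of_mem _ hC0)
    rw [hΛdef]; linarith
  set K : ℝ := Real.sqrt (Λ * D0 / δ) with hKdef
  have hK0 : 0 ≤ K := by rw [hKdef]; exact Real.sqrt_nonneg _
  clear_value K Λ δ D0 Sub Cfgs
  refine ⟨B + K + 1, by linarith, ?_⟩
  intro y _hy hdiff
  obtain ⟨C, hCmem, hCmin⟩ := Finset.exists_min_image Cfgs
    (fun C => (pooledSSP y dflt C).det) hCfgs_ne
  have hCcfg : IsConfig r C := (hCfgs_mem _).1 hCmem
  have hCmin' : ∀ P, IsConfig r P →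
      (pooledSSP y dflt C).det ≤ (pooledSSP y dflt P).det :=
    fun P hP => hCmin P ((hCfgs_mem _).2 hP)
  by_cases hcaseA : ∀ i ∈ Finset.univ.biUnion C, y i = x i
  · refine ⟨C, hCcfg, hCmin', ?_⟩
    intro j hj
    rw [← eucNorm_eq_sqrt]
    have hyx : ∀ i ∈ C j, y i = x i := fun i hi =>
      hcaseA i (Finset.mem_biUnion.2 ⟨j, Finset.mem_univ j, hi⟩)
    rw [clusterMean_congr hyx]
    have := eucNorm_clusterMean_le (dflt := dflt j) hj (fun i _ => hB i)
    linarith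
  · push_neg at hcaseA
    obtain ⟨i₀, hi₀mem, hi₀⟩ := hcaseA
    have huniq : ∀ i, i ≠ i₀ → y i = x i := by
      intro i hi
      by_contra hne'
      have hsub : ({i, i₀} : Finset (Fin n)) ⊆ Finset.univ.filter (fun i => y i ≠ x i) := by
        intro a ha
        rcases Finset.mem_insert.1 ha with h | h
        · subst h; exact Finset.mem_filter.2 ⟨Finset.mem_univ _, hne'⟩
        · rw [Finset.mem_singleton.1 h]; exact Finset.mem_filter.2 ⟨Finset.mem_univ _, hi₀⟩
      have := Finset.card_le_card hsub
      rw [Finset.card_pair hi] at this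
      omega
    obtain ⟨js, -, hjs⟩ := Finset.mem_biUnion.1 hi₀mem
    by_cases hT : ((C js).erase i₀).Nonempty
    · -- main case: the outlier's cluster has ≥ 2 elements
      obtain ⟨P, hPpsd, hdecomp⟩ := pooled_decomp x y dflt C i₀ js hCcfg.1 hjs huniq
      set C'' : Fin g → Finset (Fin n) := fun j => (C j).erase i₀ with hC''def
      have hC''card : (Finset.univ.biUnion C'').card = r - 1 := by
        rw [hC''def, biUnion_erase, Finset.card_erase_of_mem hi₀mem, hCcfg.2]
      have hC''Sub : C'' ∈ Sub := (hSub_mem _).2 hC''card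
      set A := pooledSSP x dflt C'' with hAdef
      have hApd : A.PosDef := hSubPD C'' hC''Sub
      have hδA : δ ≤ A.det := hδle C'' hC''Sub
      have hΛA2 : (∑ k, ∑ l, |A k l|) ≤ Λ := hΛ C'' hC''Sub
      clear_value A
      set v : Fin d → ℝ := y i₀ - clusterMean y (dflt js) (C js) with hv
      have hup : (pooledSSP y dflt C).det ≤ D0 := by
        obtain ⟨S0, hS0sub, hS0⟩ := Finset.exists_subset_card_eq
          (show r ≤ ((Finset.univ : Finset (Fin n)).erase i₀).card by
            rw [Finset.card_erase_of_mem (Finset.mem_univ _), huniv]; omega)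
        set P0 : Fin g → Finset (Fin n) := fun j : Fin g => if j = ⟨0, hg⟩ then S0 else ∅
          with hP0def
        have hP0cfg : IsConfig r P0 := isConfig_single hg S0 hS0
        have hP0x : pooledSSP y dflt P0 = pooledSSP x dflt P0 := by
          apply pooledSSP_congr
          intro j i hi
          refine huniq i fun h => ?_
          rw [hP0def] at hi
          simp only at hi
          by_cases hj : j = ⟨0, hg⟩
          · rw [if_pos hj] at hi
            exact (Finset.mem_erase.1 (hS0sub hi)).1 h
          · rw [if_neg hj] at hi
            exact Finset.notMem_empty i hi
        calc (pooledSSP y dflt C).det ≤ (pooledSSP y dflt P0).det := hCmin' P0 hP0cfg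
          _ = (pooledSSP x dflt P0).det := by rw [hP0x]
          _ ≤ D0 := hD0 P0 hP0cfg
      have hvvnn : 0 ≤ v ⬝ᵥ v :=
        Finset.sum_nonneg fun i _ => mul_self_nonneg _
      have hvvle : v ⬝ᵥ v ≤ Λ * D0 / δ := by
        have h1 : (A + Matrix.vecMulVec v v).det ≤ (pooledSSP y dflt C).det := by
          rw [hdecomp]
          exact det_mono_psd (hApd.add_posSemidef (psd_vecMulVec v)) hPpsd
        have h2 : A.det * (1 + v ⬝ᵥ (A⁻¹ *ᵥ v)) ≤ D0 := by
          rw [← det_add_vmv hApd]; linarith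
        set q := v ⬝ᵥ (A⁻¹ *ᵥ v) with hqdef
        have hqnn : 0 ≤ q := by simpa using (hApd.inv).posSemidef.dotProduct_mulVec_nonneg v
        have hq_le : q ≤ D0 / δ := by
          have hmul : δ * (1 + q) ≤ D0 :=
            le_trans (mul_le_mul_of_nonneg_right hδA (by linarith)) h2
          rw [le_div_iff₀ hδpos]
          nlinarith
        have hcs := cauchy_pd hApd v
        have hΛA := quad_upper A v
        rcases eq_or_lt_of_le hvvnn with h0 | h0
        · rw [← h0]; positivity
        · have hA_le : v ⬝ᵥ (A *ᵥ v) ≤ Λ * (v ⬝ᵥ v) :=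
            le_trans hΛA (mul_le_mul_of_nonneg_right hΛA2 hvvnn)
          have h3 : (v ⬝ᵥ v) * (v ⬝ᵥ v) ≤ (Λ * (v ⬝ᵥ v)) * q :=
            le_trans hcs (mul_le_mul_of_nonneg_right hA_le hqnn)
          have h4 : v ⬝ᵥ v ≤ Λ * q := by nlinarith
          calc v ⬝ᵥ v ≤ Λ * q := h4
            _ ≤ Λ * (D0 / δ) := mul_le_mul_of_nonneg_left hq_le hΛpos.le
            _ = Λ * D0 / δ := by ring
      have hvK : eucNorm v ≤ K := by
        rw [eucNorm_eq_sqrt, hKdef]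
        exact Real.sqrt_le_sqrt hvvle
      refine ⟨C, hCcfg, hCmin', ?_⟩
      intro j hj
      rw [← eucNorm_eq_sqrt]
      by_cases hjjs : j = js
      · subst hjjs
        set m := clusterMean y (dflt j) (C j) with hm
        set s := (C j).card with hs
        have hs2 : 2 ≤ s := by
          have h1 : 1 ≤ ((C j).erase i₀).card := Finset.card_pos.2 hT
          rw [Finset.card_erase_of_mem hjs] at h1
          omega
        have hsm : (s : ℝ) • m = y i₀ + ∑ i ∈ (C j).erase i₀, x i := by
          rw [hm, clusterMean, if_pos ⟨i₀, hjs⟩, smul_smul,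
            mul_inv_cancel₀ (by exact_mod_cast (by omega : s ≠ 0)), one_smul,
            ← Finset.add_sum_erase _ _ hjs]
          congr 1
          exact Finset.sum_congr rfl fun i hi => huniq i (Finset.ne_of_mem_erase hi)
        have hid : ((s : ℝ) - 1) • m = v + ∑ i ∈ (C j).erase i₀, x i := by
          rw [sub_smul, one_smul, hsm, hv]
          abel
        have hspos : (0:ℝ) ≤ (s:ℝ) - 1 := by
          have : (2:ℝ) ≤ (s:ℝ) := by exact_mod_cast hs2
          linarith
        have hs1 : (1:ℝ) ≤ (s:ℝ) - 1 := by
          have : (2:ℝ) ≤ (s:ℝ) := by exact_mod_cast hs2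
          linarith
        have hnorm : ((s : ℝ) - 1) * eucNorm m ≤ K + ((s:ℝ) - 1) * B := by
          have e1 : ((s:ℝ)-1) * eucNorm m = eucNorm (((s:ℝ)-1) • m) := by
            rw [eucNorm_smul, abs_of_nonneg hspos]
          rw [e1, hid]
          have e2 := eucNorm_add_le v (∑ i ∈ (C j).erase i₀, x i)
          have e3 := eucNorm_sum_le ((C j).erase i₀) x
          have e4 : ∑ i ∈ (C j).erase i₀, eucNorm (x i) ≤ ∑ _i ∈ (C j).erase i₀, B :=
            Finset.sum_le_sum fun i _ => hB i
          rw [Finset.sum_const, nsmul_eq_mul, Finset.card_erase_of_mem hjs] at e4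
          have e5 : ((s - 1 : ℕ) : ℝ) = (s:ℝ) - 1 := by
            have : 1 ≤ s := by omega
            push_cast [this]
            ring
          rw [e5] at e4
          linarith
        by_cases hmb : eucNorm m ≤ B
        · linarith
        · push_neg at hmb
          have hh1 : ((s:ℝ)-1) * (eucNorm m - B) ≤ K := by nlinarith
          have hh2 : eucNorm m - B ≤ ((s:ℝ)-1) * (eucNorm m - B) :=
            le_mul_of_one_le_left (by linarith) hs1
          linarith
      · have hyx : ∀ i ∈ C j, y i = x i := fun i hi =>
          huniq i fun h => (Finset.disjoint_left.1 (hCcfg.1 j js hjjs) hi) (h ▸ hjs)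
        rw [clusterMean_congr hyx]
        have := eucNorm_clusterMean_le (dflt := dflt j) hj fun i _ => hB i
        linarith
    · -- the outlier is alone in its cluster: swap it for a fresh point
      have hsingle : C js = {i₀} := by
        apply Finset.eq_singleton_iff_unique_mem.2
        refine ⟨hjs, fun a ha => ?_⟩
        by_contra hne'
        exact hT ⟨a, Finset.mem_erase.2 ⟨hne', ha⟩⟩
      have hmiss : ((Finset.univ : Finset (Fin n)) \ Finset.univ.biUnion C).Nonempty := by
        rw [← Finset.card_pos, Finset.card_sdiff_of_subset (Finset.subset_univ _), hCcfg.2, huniv]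
        omega
      obtain ⟨i₁, hi₁⟩ := hmiss
      have hi₁not : i₁ ∉ Finset.univ.biUnion C := (Finset.mem_sdiff.1 hi₁).2
      set C' : Fin g → Finset (Fin n) := fun j => if j = js then {i₁} else C j with hC'def
      have hC'disj : ∀ j k : Fin g, j ≠ k → Disjoint (C' j) (C' k) := by
        intro j k hjk
        rw [hC'def]
        simp only
        by_cases hj : j = js <;> by_cases hk : k = js
        · exact absurd (hj.trans hk.symm) hjk
        · rw [if_pos hj, if_neg hk]
          exact Finset.disjoint_singleton_left.2 fun h =>
            hi₁not (Finset.mem_biUnion.2 ⟨k, Finset.mem_univ _, h⟩)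
        · rw [if_neg hj, if_pos hk]
          exact Finset.disjoint_singleton_right.2 fun h =>
            hi₁not (Finset.mem_biUnion.2 ⟨j, Finset.mem_univ _, h⟩)
        · rw [if_neg hj, if_neg hk]
          exact hCcfg.1 j k hjk
      have hC'card : (Finset.univ.biUnion C').card = r := by
        rw [Finset.card_biUnion (fun j _ k _ h => hC'disj j k h)]
        rw [← hCcfg.2, Finset.card_biUnion (fun j _ k _ h => hCcfg.1 j k h)]
        refine Finset.sum_congr rfl fun j _ => ?_
        rw [hC'def]
        simp only
        by_cases hj : j = js
        · rw [if_pos hj, hj, hsingle]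
          simp
        · rw [if_neg hj]
      have hC'cfg : IsConfig r C' := ⟨hC'disj, hC'card⟩
      have hsspEq : pooledSSP y dflt C' = pooledSSP y dflt C := by
        unfold pooledSSP
        refine Finset.sum_congr rfl fun j _ => ?_
        by_cases hj : j = js
        · subst hj
          have hC'j : C' j = {i₁} := by rw [hC'def]; simp
          rw [hC'j, hsingle, ssp_singleton, ssp_singleton]
        · rw [hC'def]
          simp only [if_neg hj]
      refine ⟨C', hC'cfg, ?_, ?_⟩
      · intro P hP
        rw [hsspEq]
        exact hCmin' P hP
      · intro j hj
        rw [← eucNorm_eq_sqrt]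
        have hyx : ∀ i ∈ C' j, y i = x i := by
          intro i hi
          refine huniq i fun h => ?_
          subst h
          by_cases hjjs : j = js
          · have hC'j : C' j = {i₁} := by rw [hC'def]; simp [hjjs]
            rw [hC'j, Finset.mem_singleton] at hi
            exact hi₁not (hi ▸ hi₀mem)
          · have hC'j : C' j = C j := by rw [hC'def]; simp [hjjs]
            rw [hC'j] at hi
            exact (Finset.disjoint_left.1 (hCcfg.1 j js hjjs) hi) hjs
        rw [clusterMean_congr hyx]
        have := eucNorm_clusterMean_le (dflt := dflt j) hj fun i _ => hB i
        linarith
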